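/- Every finitely generated subgroup of an inverse limit of free groups is locally free; in particular, any subgroup of an inverse limit lim←(F_1 ← F_2 ← ⋯) of free groups of finite rank is locally free. -/

import Mathlib

/- Proof that every finitely generated subgroup of an inverse limit of free groups is free.
   Main steps: residual finiteness of free groups (via an explicit permutation action built
   from a reduced word), rank bounds via `ZMod 2` coefficients, Hopficity of f.g. free
   groups by counting homomorphisms into finite groups, and a stabilization argument for
   the ranks of the projections. -/

namespace Stmt18
universe u v
variable {α : Type*} [DecidableEq α]

def Reduced (L : List (α × Bool)) : Prop :=
  ∀ (i : ℕ) (c : α) (b₁ b₂ : Bool), L[i]? = some (c, b₁) → L[i+1]? = some (c, b₂) → b₁ = b₂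

lemma idx_lt {L : List (α × Bool)} {i : ℕ} {a : α × Bool} (h : L[i]? = some a) :
    i < L.length := (List.getElem?_eq_some_iff.1 h).1

section Perm
variable (L : List (α × Bool)) (c : α)

def Dom (j : Fin (L.length + 1)) : Prop :=
  (L[L.length - 1 - j.val]? = some (c, true) ∧ j.val < L.length) ∨
  (L[L.length - j.val]? = some (c, false) ∧ 1 ≤ j.val)

def Ran (j : Fin (L.length + 1)) : Prop :=
  (L[L.length - j.val]? = some (c, true) ∧ 1 ≤ j.val) ∨
  (L[L.length - 1 - j.val]? = some (c, false) ∧ j.val < L.length)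

instance : DecidablePred (Dom L c) := fun j => by unfold Dom; infer_instance
instance : DecidablePred (Ran L c) := fun j => by unfold Ran; infer_instance

def fwd (j : Fin (L.length + 1)) : Fin (L.length + 1) :=
  if h : L[L.length - 1 - j.val]? = some (c, true) ∧ j.val < L.length then
    ⟨j.val + 1, by have := h.2; omega⟩
  else if L[L.length - j.val]? = some (c, false) ∧ 1 ≤ j.val then
    ⟨j.val - 1, by have := j.isLt; omega⟩
  else j

def bwd (j : Fin (L.length + 1)) : Fin (L.length + 1) :=
  if L[L.length - j.val]? = some (c, true) ∧ 1 ≤ j.val then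
    ⟨j.val - 1, by have := j.isLt; omega⟩
  else if h : L[L.length - 1 - j.val]? = some (c, false) ∧ j.val < L.length then
    ⟨j.val + 1, by have := h.2; omega⟩
  else j

variable {L c}

lemma fwd_up {j : Fin (L.length + 1)} (h : L[L.length - 1 - j.val]? = some (c, true))
    (hj : j.val < L.length) : fwd L c j = ⟨j.val + 1, by omega⟩ := by
  rw [fwd, dif_pos ⟨h, hj⟩]

lemma fwd_dn (hred : Reduced L) {j : Fin (L.length + 1)}
    (h : L[L.length - j.val]? = some (c, false)) (hj : 1 ≤ j.val) :
    fwd L c j = ⟨j.val - 1, by omega⟩ := by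
  have hlt : L.length - j.val < L.length := idx_lt h
  rw [fwd, dif_neg, if_pos ⟨h, hj⟩]
  rintro ⟨hu, hju⟩
  have hidx : L.length - j.val = (L.length - 1 - j.val) + 1 := by omega
  rw [hidx] at h
  exact absurd (hred _ c true false hu h) (by simp)

lemma bwd_upT {j : Fin (L.length + 1)} (h : L[L.length - j.val]? = some (c, true))
    (hj : 1 ≤ j.val) : bwd L c j = ⟨j.val - 1, by omega⟩ := by
  rw [bwd, if_pos ⟨h, hj⟩]

lemma bwd_dnT (hred : Reduced L) {j : Fin (L.length + 1)}
    (h : L[L.length - 1 - j.val]? = some (c, false)) (hj : j.val < L.length) :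
    bwd L c j = ⟨j.val + 1, by omega⟩ := by
  rw [bwd, if_neg, dif_pos ⟨h, hj⟩]
  rintro ⟨hu, hju⟩
  have hidx : L.length - j.val = (L.length - 1 - j.val) + 1 := by omega
  rw [hidx] at hu
  exact absurd (hred _ c false true h hu) (by simp)

lemma fwd_mem {j : Fin (L.length + 1)} (hred : Reduced L) (h : Dom L c j) :
    Ran L c (fwd L c j) := by
  rcases h with ⟨h, hj⟩ | ⟨h, hj⟩
  · rw [fwd_up h hj]
    left
    constructor
    · have : L.length - (j.val + 1) = L.length - 1 - j.val := by omega
      rw [this]; exact h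
    · simp
  · have hlt : L.length - j.val < L.length := idx_lt h
    rw [fwd_dn hred h hj]
    right
    constructor
    · have : L.length - 1 - (j.val - 1) = L.length - j.val := by omega
      rw [this]; exact h
    · show j.val - 1 < L.length
      omega

lemma bwd_mem {j : Fin (L.length + 1)} (hred : Reduced L) (h : Ran L c j) :
    Dom L c (bwd L c j) := by
  rcases h with ⟨h, hj⟩ | ⟨h, hj⟩
  · have hlt : L.length - j.val < L.length := idx_lt h
    rw [bwd_upT h hj]
    left
    constructor
    · have : L.length - 1 - (j.val - 1) = L.length - j.val := by omega
      rw [this]; exact h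
    · show j.val - 1 < L.length
      omega
  · rw [bwd_dnT hred h hj]
    right
    constructor
    · have : L.length - (j.val + 1) = L.length - 1 - j.val := by omega
      rw [this]; exact h
    · simp

lemma bwd_fwd {j : Fin (L.length + 1)} (hred : Reduced L) (h : Dom L c j) :
    bwd L c (fwd L c j) = j := by
  rcases h with ⟨h, hj⟩ | ⟨h, hj⟩
  · rw [fwd_up h hj]
    have h' : L[L.length - (j.val + 1)]? = some (c, true) := by
      have : L.length - (j.val + 1) = L.length - 1 - j.val := by omega
      rw [this]; exact h
    rw [bwd_upT h' (by simp)]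
    ext; simp
  · have hlt : L.length - j.val < L.length := idx_lt h
    rw [fwd_dn hred h hj]
    have h' : L[L.length - 1 - (j.val - 1)]? = some (c, false) := by
      have : L.length - 1 - (j.val - 1) = L.length - j.val := by omega
      rw [this]; exact h
    rw [bwd_dnT hred h' (show j.val - 1 < L.length by omega)]
    ext; simp; omega

lemma fwd_bwd {j : Fin (L.length + 1)} (hred : Reduced L) (h : Ran L c j) :
    fwd L c (bwd L c j) = j := by
  rcases h with ⟨h, hj⟩ | ⟨h, hj⟩
  · have hlt : L.length - j.val < L.length := idx_lt h
    rw [bwd_upT h hj]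
    have h' : L[L.length - 1 - (j.val - 1)]? = some (c, true) := by
      have : L.length - 1 - (j.val - 1) = L.length - j.val := by omega
      rw [this]; exact h
    rw [fwd_up h' (show j.val - 1 < L.length by omega)]
    ext; simp; omega
  · rw [bwd_dnT hred h hj]
    have h' : L[L.length - (j.val + 1)]? = some (c, false) := by
      have : L.length - (j.val + 1) = L.length - 1 - j.val := by omega
      rw [this]; exact h
    rw [fwd_dn hred h' (by simp)]
    ext; simp

variable (L c)

noncomputable def eqv (hred : Reduced L) :
    {j : Fin (L.length + 1) // Dom L c j} ≃ {j : Fin (L.length + 1) // Ran L c j} where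
  toFun j := ⟨fwd L c j.1, fwd_mem hred j.2⟩
  invFun j := ⟨bwd L c j.1, bwd_mem hred j.2⟩
  left_inv j := Subtype.ext (bwd_fwd hred j.2)
  right_inv j := Subtype.ext (fwd_bwd hred j.2)

noncomputable def sigma (hred : Reduced L) : Equiv.Perm (Fin (L.length + 1)) :=
  Equiv.subtypeCongr (eqv L c hred)
    (Fintype.equivOfCardEq (by
      rw [Fintype.card_subtype_compl, Fintype.card_subtype_compl,
        Fintype.card_congr (eqv L c hred)]))

lemma subtypeCongr_pos {β : Type*} {p q : β → Prop} [DecidablePred p] [DecidablePred q]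
    (e : { x // p x } ≃ { x // q x }) (f : { x // ¬p x } ≃ { x // ¬q x }) {a : β} (h : p a) :
    Equiv.subtypeCongr e f a = (e ⟨a, h⟩ : β) := by
  simp [Equiv.subtypeCongr, h]

variable {L c}

lemma sigma_up (hred : Reduced L) {j : Fin (L.length + 1)}
    (h : L[L.length - 1 - j.val]? = some (c, true)) (hj : j.val < L.length) :
    sigma L c hred j = ⟨j.val + 1, by omega⟩ := by
  rw [sigma, subtypeCongr_pos (p := Dom L c) (q := Ran L c) _ _ (Or.inl ⟨h, hj⟩)]
  show (fwd L c j) = _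
  rw [fwd_up h hj]

lemma sigma_dn (hred : Reduced L) {j : Fin (L.length + 1)}
    (h : L[L.length - j.val]? = some (c, false)) (hj : 1 ≤ j.val) :
    sigma L c hred j = ⟨j.val - 1, by omega⟩ := by
  rw [sigma, subtypeCongr_pos (p := Dom L c) (q := Ran L c) _ _ (Or.inr ⟨h, hj⟩)]
  show (fwd L c j) = _
  rw [fwd_dn hred h hj]

end Perm

lemma red_toWord {x : FreeGroup α} {i : ℕ} {c : α} {b₁ b₂ : Bool}
    (h1 : x.toWord[i]? = some (c, b₁)) (h2 : x.toWord[i+1]? = some (c, b₂)) :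
    b₁ = b₂ := by
  by_contra hne
  obtain ⟨hi1, he1⟩ := List.getElem?_eq_some_iff.1 h1
  obtain ⟨hi2, he2⟩ := List.getElem?_eq_some_iff.1 h2
  have hb : b₂ = !b₁ := by cases b₁ <;> cases b₂ <;> simp_all
  have hdec : x.toWord = x.toWord.take i ++ (c, b₁) :: (c, !b₁) :: x.toWord.drop (i+2) := by
    conv_lhs => rw [← List.take_append_drop i x.toWord]
    congr 1
    rw [List.drop_eq_getElem_cons hi1, he1, List.drop_eq_getElem_cons hi2, he2, hb]
  have := x.reduce_toWord
  rw [hdec] at this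
  exact FreeGroup.reduce.not this

lemma reduced_toWord (x : FreeGroup α) : Reduced x.toWord :=
  fun _ _ _ _ h1 h2 => red_toWord h1 h2

lemma eval_aux (L : List (α × Bool)) (hred : Reduced L) :
    ∀ (d i : ℕ), i + d = L.length →
      ((L.drop i).map (fun p => cond p.2 (sigma L p.1 hred) (sigma L p.1 hred)⁻¹)).prod
          ⟨0, by omega⟩
        = ⟨L.length - i, by omega⟩ := by
  intro d
  induction d with
  | zero =>
    intro i hi
    have : i = L.length := by omega
    subst this
    simp [List.drop_length]
  | succ d ih =>
    intro i hi
    have hilt : i < L.length := by omega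
    rw [List.drop_eq_getElem_cons hilt, List.map_cons, List.prod_cons]
    have hrec := ih (i + 1) (by omega)
    rw [Equiv.Perm.mul_apply, hrec]
    have hget : L[i]? = some L[i] := List.getElem?_eq_getElem hilt
    rcases hL : L[i] with ⟨c, b⟩
    rw [hL] at hget
    cases b
    · -- b = false : apply inverse
      show (sigma L c hred)⁻¹ _ = _
      have h1 : L[L.length - (L.length - i)]? = some (c, false) := by
        have : L.length - (L.length - i) = i := by omega
        rw [this]; exact hget
      have h2 := sigma_dn (c := c) hred (j := ⟨L.length - i, by omega⟩) h1 (by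
        show 1 ≤ L.length - i; omega)
      rw [show ((sigma L c hred)⁻¹ : Equiv.Perm _) = (sigma L c hred).symm from rfl,
        Equiv.symm_apply_eq, h2]
      apply Fin.ext
      show L.length - i - 1 = L.length - (i + 1)
      omega
    · -- b = true
      show (sigma L c hred) _ = _
      have h1 : L[L.length - 1 - (L.length - (i + 1))]? = some (c, true) := by
        have : L.length - 1 - (L.length - (i + 1)) = i := by omega
        rw [this]; exact hget
      have h2 := sigma_up (c := c) hred (j := ⟨L.length - (i + 1), by omega⟩) h1 (by
        show L.length - (i + 1) < L.length; omega)
      rw [h2]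
      apply Fin.ext
      show L.length - (i + 1) + 1 = L.length - i
      omega

lemma exists_perm_hom (x : FreeGroup α) (hx : x ≠ 1) :
    ∃ (m : ℕ) (φ : FreeGroup α →* Equiv.Perm (Fin m)), φ x ≠ 1 := by
  set L := x.toWord with hLdef
  have hred : Reduced L := reduced_toWord x
  have hn : 1 ≤ L.length := by
    rcases Nat.eq_zero_or_pos L.length with h | h
    · exact absurd (FreeGroup.toWord_eq_nil_iff.1 (List.length_eq_zero_iff.1 h)) hx
    · exact h
  refine ⟨L.length + 1, FreeGroup.lift (fun c => sigma L c hred), ?_⟩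
  intro hone
  have h0 : FreeGroup.lift (fun c => sigma L c hred) x ⟨0, by omega⟩ = ⟨L.length, by omega⟩ := by
    conv_lhs => rw [congrArg (FreeGroup.lift (fun c => sigma L c hred)) (FreeGroup.mk_toWord (x := x)).symm, FreeGroup.lift_mk]
    have := eval_aux L hred L.length 0 (by omega)
    simpa using this
  rw [hone] at h0
  have : (0 : ℕ) = L.length := congrArg Fin.val h0
  omega

lemma exists_sep_hom {G : Type*} [Group G] [IsFreeGroup G] {g : G} (hg : g ≠ 1) :
    ∃ (m : ℕ) (φ : G →* Equiv.Perm (Fin m)), φ g ≠ 1 := by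
  letI := Classical.decEq (IsFreeGroup.Generators G)
  set e := IsFreeGroup.toFreeGroup (G := G)
  have he : e g ≠ 1 := by
    intro h
    exact hg (by simpa using (MulEquiv.map_eq_one_iff e).1 h)
  obtain ⟨m, φ, hφ⟩ := exists_perm_hom (e g) he
  exact ⟨m, φ.comp e.toMonoidHom, hφ⟩


open Cardinal in
lemma card_le_of_closure_eq_top {S : Type u} (T : Finset (FreeGroup S))
    (hT : Subgroup.closure (T : Set (FreeGroup S)) = ⊤) :
    Finite S ∧ Nat.card S ≤ T.card := by
  set V := S →₀ ZMod 2
  set ℓ : FreeGroup S →* Multiplicative V :=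
    FreeGroup.lift (fun s => Multiplicative.ofAdd (Finsupp.single s 1)) with hℓ
  set X : Set V := (fun w => Multiplicative.toAdd (ℓ w)) '' (T : Set (FreeGroup S)) with hX
  have hmem : ∀ w : FreeGroup S, Multiplicative.toAdd (ℓ w) ∈ Submodule.span (ZMod 2) X := by
    intro w
    have hw : w ∈ Subgroup.closure (T : Set (FreeGroup S)) := hT ▸ Subgroup.mem_top w
    induction hw using Subgroup.closure_induction with
    | mem t ht => exact Submodule.subset_span ⟨t, ht, rfl⟩
    | one => simpa using Submodule.zero_mem _
    | mul a b _ _ ha hb => rw [map_mul]; exact Submodule.add_mem _ ha hb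
    | inv a _ ha => rw [map_inv]; exact Submodule.neg_mem _ ha
  have hspan : Submodule.span (ZMod 2) X = ⊤ := by
    apply top_unique
    rw [← (Finsupp.basisSingleOne (R := ZMod 2) (ι := S)).span_eq]
    apply Submodule.span_le.2
    rintro _ ⟨s, rfl⟩
    rw [show Finsupp.basisSingleOne (R := ZMod 2) (ι := S) s = Finsupp.single s (1 : ZMod 2) from
      congrFun Finsupp.coe_basisSingleOne s]
    have : Finsupp.single s (1 : ZMod 2) = Multiplicative.toAdd (ℓ (FreeGroup.of s)) := by
      simp [hℓ]
    rw [this]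
    exact hmem _
  have hrank : (Cardinal.lift.{0} (#S)) ≤ #X := by
    have h1 : Module.rank (ZMod 2) (Submodule.span (ZMod 2) X) ≤ #X := rank_span_le X
    rw [hspan, rank_top, rank_finsupp_self] at h1
    exact h1
  have hXle : #X ≤ (T.card : Cardinal) := by
    calc #X ≤ #(T : Set (FreeGroup S)) := Cardinal.mk_image_le
    _ = T.card := Cardinal.mk_coe_finset
  have hS : #S ≤ (T.card : Cardinal) := by
    rw [Cardinal.lift_uzero] at hrank
    exact hrank.trans hXle
  have hfin : Finite S := by
    rw [← Cardinal.lt_aleph0_iff_finite]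
    exact lt_of_le_of_lt hS (Cardinal.nat_lt_aleph0 _)
  refine ⟨hfin, ?_⟩
  have := Cardinal.toNat_le_toNat hS (Cardinal.nat_lt_aleph0 _)
  rwa [Cardinal.toNat_natCast, ← Nat.card, Nat.card] at this


lemma generators_card_eq_rank (G : Type u) [Group G] [IsFreeGroup G] [Group.FG G] :
    Finite (IsFreeGroup.Generators G) ∧ Nat.card (IsFreeGroup.Generators G) = Group.rank G := by
  obtain ⟨T, hTcard, hTtop⟩ := Group.rank_spec G
  letI := Classical.decEq (FreeGroup (IsFreeGroup.Generators G))
  letI := Classical.decEq G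
  set e : G ≃* FreeGroup (IsFreeGroup.Generators G) := IsFreeGroup.toFreeGroup (G := G) with he
  set T' : Finset (FreeGroup (IsFreeGroup.Generators G)) := T.image e with hT'
  have htop' : Subgroup.closure (T' : Set (FreeGroup (IsFreeGroup.Generators G))) = ⊤ := by
    rw [hT', Finset.coe_image]
    change Subgroup.closure (e.toMonoidHom '' (T : Set G)) = ⊤
    rw [← MonoidHom.map_closure, hTtop]
    exact Subgroup.map_top_of_surjective _ e.surjective
  obtain ⟨hfin, hle⟩ := card_le_of_closure_eq_top _ htop'
  refine ⟨hfin, le_antisymm (hle.trans ((Finset.card_image_le).trans_eq hTcard)) ?_⟩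
  haveI := hfin
  letI : Fintype (IsFreeGroup.Generators G) := Fintype.ofFinite _
  set T₀ : Finset G := Finset.univ.image (fun a => e.symm (FreeGroup.of a)) with hT₀
  have hT₀top : Subgroup.closure (T₀ : Set G) = ⊤ := by
    rw [hT₀, Finset.coe_image, Finset.coe_univ, Set.image_univ]
    have : Set.range (fun a => e.symm (FreeGroup.of a)) =
        e.symm.toMonoidHom '' (Set.range FreeGroup.of) := by
      rw [← Set.range_comp]; rfl
    rw [this, ← MonoidHom.map_closure, FreeGroup.closure_range_of]
    exact Subgroup.map_top_of_surjective _ e.symm.surjective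
  calc Group.rank G ≤ T₀.card := Group.rank_le hT₀top
  _ ≤ Finset.univ.card := Finset.card_image_le
  _ = Nat.card (IsFreeGroup.Generators G) := by
      rw [Finset.card_univ, Nat.card_eq_fintype_card]

lemma card_hom (G : Type u) (Q : Type v) [Group G] [IsFreeGroup G] [Group.FG G] [Group Q]
    [Finite Q] : Nat.card (G →* Q) = Nat.card Q ^ Group.rank G := by
  obtain ⟨hfin, hcard⟩ := generators_card_eq_rank G
  haveI := hfin
  rw [← hcard, ← Nat.card_fun]
  exact (Nat.card_congr (IsFreeGroup.lift (G := G) (H := Q))).symm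

lemma finite_hom (G : Type u) (Q : Type v) [Group G] [IsFreeGroup G] [Group.FG G] [Group Q]
    [Finite Q] : Finite (G →* Q) := by
  haveI := (generators_card_eq_rank G).1
  exact Finite.of_equiv _ (IsFreeGroup.lift (G := G) (H := Q))

lemma hopf {A : Type u} {B : Type v} [Group A] [Group B] [IsFreeGroup A] [IsFreeGroup B]
    [Group.FG A] [Group.FG B] (f : A →* B) (hf : Function.Surjective f)
    (hr : Group.rank A ≤ Group.rank B) : Function.Injective f := by
  rw [injective_iff_map_eq_one]
  intro a ha
  by_contra hne
  obtain ⟨m, φ, hφ⟩ := exists_sep_hom (G := A) hne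
  set Q := Equiv.Perm (Fin m) with hQ
  haveI : Finite (B →* Q) := finite_hom B Q
  haveI : Finite (A →* Q) := finite_hom A Q
  have hinj : Function.Injective (fun ψ : B →* Q => ψ.comp f) := by
    intro ψ₁ ψ₂ h
    apply MonoidHom.ext
    intro b
    obtain ⟨a', rfl⟩ := hf b
    exact DFunLike.congr_fun h a'
  have hcardle : Nat.card (A →* Q) ≤ Nat.card (B →* Q) := by
    rw [card_hom, card_hom]
    exact Nat.pow_le_pow_right Nat.card_pos hr
  have hsurj : Function.Surjective (fun ψ : B →* Q => ψ.comp f) :=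
    ((Nat.bijective_iff_injective_and_card _).2
      ⟨hinj, le_antisymm (Nat.card_le_card_of_injective _ hinj) hcardle⟩).2
  obtain ⟨ψ, hψ⟩ := hsurj φ
  apply hφ
  rw [← hψ]
  show ψ (f a) = 1
  rw [ha, map_one]


lemma key {F : ℕ → Type*} [∀ k, Group (F k)] [∀ k, IsFreeGroup (F k)]
    (T : ∀ k, F (k + 1) →* F k) (L : Subgroup (∀ k, F k))
    (hL : ∀ x : ∀ k, F k, x ∈ L ↔ ∀ k, T k (x (k + 1)) = x k)
    (K : Subgroup (∀ k, F k)) (hKL : K ≤ L) (hK : K.FG) : IsFreeGroup K := by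
  haveI : Group.FG K := (Group.fg_iff_subgroup_fg K).2 hK
  set π : ∀ k, K →* F k := fun k => (Pi.evalMonoidHom F k).comp K.subtype with hπ
  set Q : ∀ k, Subgroup (F k) := fun k => (π k).range with hQ
  have hcomp : ∀ k (x : K), T k ((x : ∀ k, F k) (k+1)) = (x : ∀ k, F k) k :=
    fun k x => (hL x).1 (hKL x.2) k
  have hmapsto : ∀ k (y : Q (k+1)), T k (y : F (k+1)) ∈ Q k := by
    rintro k ⟨y, hy⟩
    obtain ⟨x, rfl⟩ := hy
    exact ⟨x, (hcomp k x).symm⟩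
  set t : ∀ k, Q (k+1) →* Q k :=
    fun k => ((T k).comp (Q (k+1)).subtype).codRestrict (Q k) (hmapsto k) with htdef
  have htsurj : ∀ k, Function.Surjective (t k) := by
    rintro k ⟨y, hy⟩
    obtain ⟨x, rfl⟩ := hy
    refine ⟨⟨π (k+1) x, ⟨x, rfl⟩⟩, ?_⟩
    apply Subtype.ext
    exact hcomp k x
  haveI : ∀ k, Group.FG (Q k) := fun k => Group.fg_range (π k)
  set r : ℕ → ℕ := fun k => Group.rank (Q k) with hrdef
  have hmono : Monotone r :=
    monotone_nat_of_le_succ (fun k => Group.rank_le_of_surjective (t k) (htsurj k))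
  have hbdd : ∀ k, r k ≤ Group.rank K := fun k =>
    Group.rank_le_of_surjective (π k).rangeRestrict (π k).rangeRestrict_surjective
  obtain ⟨N, hN⟩ : ∃ N, ∀ k, N ≤ k → r k = r N := by
    have hne : (Set.range r).Nonempty := ⟨r 0, 0, rfl⟩
    have hbd : BddAbove (Set.range r) := ⟨Group.rank K, by rintro _ ⟨k, rfl⟩; exact hbdd k⟩
    obtain ⟨N, hN⟩ := Nat.sSup_mem hne hbd
    refine ⟨N, fun k hk => le_antisymm ?_ (hmono hk)⟩
    rw [hN]
    exact le_csSup hbd ⟨k, rfl⟩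
  have htinj : ∀ k, N ≤ k → Function.Injective (t k) := by
    intro k hk
    apply hopf (t k) (htsurj k)
    show r (k+1) ≤ r k
    rw [hN (k+1) (by omega), hN k hk]
  have hinj : Function.Injective (π N) := by
    rw [injective_iff_map_eq_one]
    intro x hx
    have hup : ∀ j, (x : ∀ k, F k) (N + j) = 1 := by
      intro j
      induction j with
      | zero => exact hx
      | succ j ih =>
        have hmem : (x : ∀ k, F k) (N+j+1) ∈ Q (N+j+1) := ⟨x, rfl⟩
        have h1 : t (N+j) ⟨_, hmem⟩ = 1 := by
          apply Subtype.ext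
          show T (N+j) ((x : ∀ k, F k) (N+j+1)) = 1
          rw [hcomp (N+j) x]
          exact ih
        have h2 : t (N+j) ⟨_, hmem⟩ = t (N+j) 1 := by rw [h1, map_one]
        have := htinj (N+j) (by omega) h2
        exact congrArg Subtype.val this
    have hall : ∀ k, (x : ∀ k, F k) k = 1 := by
      have hdown : ∀ d, (x : ∀ k, F k) (N - d) = 1 := by
        intro d
        induction d with
        | zero => simpa using hup 0
        | succ d ih =>
          rcases le_or_gt N d with h | h
          · have he : N - (d+1) = N - d := by omega
            rw [he]; exact ih
          · have hstep : T (N - (d+1)) ((x : ∀ k, F k) (N - (d+1) + 1)) =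
                (x : ∀ k, F k) (N - (d+1)) := hcomp _ x
            have he : N - (d+1) + 1 = N - d := by omega
            have h1 : (x : ∀ k, F k) (N - (d+1) + 1) = 1 := by rw [he]; exact ih
            rw [← hstep, h1, map_one]
      intro k
      rcases le_or_gt N k with h | h
      · have he : k = N + (k - N) := by omega
        rw [he]; exact hup (k - N)
      · have he : k = N - (N - k) := by omega
        rw [he]; exact hdown (N - k)
    exact Subtype.ext (funext hall)
  exact IsFreeGroup.ofMulEquiv (MonoidHom.ofInjective hinj).symm

end Stmt18

/-- Every finitely generated subgroup of an inverse limit of free groups is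
locally free; in particular, if all the free groups have finite rank, then
every subgroup of the inverse limit is locally free.  The inverse limit is
modelled as a subgroup `L` of the product consisting exactly of the
compatible sequences. -/
theorem stmt_18 (F : ℕ → Type*) [∀ k, Group (F k)]
    [∀ k, IsFreeGroup (F k)]
    (T : ∀ k, F (k + 1) →* F k)
    (L : Subgroup (∀ k, F k))
    (hL : ∀ x : ∀ k, F k, x ∈ L ↔ ∀ k, T k (x (k + 1)) = x k) :
    (∀ H : Subgroup (∀ k, F k), H ≤ L → H.FG →
      ∀ K : Subgroup H, K.FG → IsFreeGroup K) ∧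
    ((∀ k, (⊤ : Subgroup (F k)).FG) →
      ∀ H : Subgroup (∀ k, F k), H ≤ L →
        ∀ K : Subgroup H, K.FG → IsFreeGroup K) := by
  have main : ∀ H : Subgroup (∀ k, F k), H ≤ L → ∀ K : Subgroup H, K.FG → IsFreeGroup K := by
    intro H hH K hKfg
    set K' : Subgroup (∀ k, F k) := K.map H.subtype with hK'
    have h1 : K' ≤ L := le_trans (Subgroup.map_subtype_le K) hH
    set e : K ≃* K' := K.equivMapOfInjective H.subtype (Subgroup.subtype_injective H) with he
    have h2 : K'.FG := by
      rw [← Group.fg_iff_subgroup_fg]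
      haveI : Group.FG K := (Group.fg_iff_subgroup_fg K).2 hKfg
      exact Group.fg_of_surjective (f := e.toMonoidHom) e.surjective
    haveI := Stmt18.key T L hL K' h1 h2
    exact IsFreeGroup.ofMulEquiv e.symm
  exact ⟨fun H hH _ => main H hH, fun _ H hH => main H hH⟩
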